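/- The following are equivalent: (1) there is a p-inductive formula that is not <-inductive; (2) in some model M of PA⁻, there is an element c, definable in M by a parameter-free L_OR formula, such that M ⊨ ¬∃y( c = 2y ∨ c = 2y+1 ) (i.e., c is neither even nor odd). -/

import Mathlib

open FirstOrder Language

/-! ### The language `L_OR = {0, 1, +, ×, <}` of ordered rings -/

/-- Function symbols of the language of ordered rings. -/
inductive LorFunc : ℕ → Type
  | zero : LorFunc 0
  | one : LorFunc 0
  | add : LorFunc 2
  | mul : LorFunc 2

/-- Relation symbols of the language of ordered rings: just `<`. -/
inductive LorRel : ℕ → Type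
  | lt : LorRel 2

/-- The first-order language of ordered rings. -/
def Lor : Language := ⟨LorFunc, LorRel⟩

/-- The term `0`. -/
def zeroT {α : Type} : Lor.Term α := Constants.term LorFunc.zero

/-- The term `1`. -/
def oneT {α : Type} : Lor.Term α := Constants.term LorFunc.one

/-- Addition of terms. -/
def addT {α : Type} (t u : Lor.Term α) : Lor.Term α := Functions.apply₂ LorFunc.add t u

/-- Multiplication of terms. -/
def mulT {α : Type} (t u : Lor.Term α) : Lor.Term α := Functions.apply₂ LorFunc.mul t u

/-- The term `2`, an abbreviation for `1 + 1`. -/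
def twoT {α : Type} : Lor.Term α := addT oneT oneT

/-- The numeral `k`, i.e. the closed term `(⋯((0+1)+1)+⋯+1)` with `k` ones. -/
def numT {α : Type} : ℕ → Lor.Term α
  | 0 => zeroT
  | n + 1 => addT (numT n) oneT

/-- The bounded formula `t < u`. -/
def ltBF {α : Type} {n : ℕ} (t u : Lor.Term (α ⊕ Fin n)) : Lor.BoundedFormula α n :=
  Relations.boundedFormula₂ LorRel.lt t u

/-- The formula `t < u`. -/
def ltFml {α : Type} (t u : Lor.Term α) : Lor.Formula α :=
  Relations.formula₂ LorRel.lt t u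

/-- The formula `t ≤ u`, an abbreviation for `t < u ∨ t = u`. -/
def leFml {α : Type} (t u : Lor.Term α) : Lor.Formula α :=
  ltFml t u ⊔ Term.equal t u

/-! ### The base theory `PA⁻` -/

/-- `PA⁻`, the theory of non-negative parts of discretely ordered rings. -/
def PAminus : Lor.Theory :=
  { -- (P1) associativity of +
    ∀' ∀' ∀' (addT (addT &0 &1) &2 =' addT &0 (addT &1 &2)),
    -- (P2) commutativity of +
    ∀' ∀' (addT &0 &1 =' addT &1 &0),
    -- (P3) associativity of ×
    ∀' ∀' ∀' (mulT (mulT &0 &1) &2 =' mulT &0 (mulT &1 &2)),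
    -- (P4) commutativity of ×
    ∀' ∀' (mulT &0 &1 =' mulT &1 &0),
    -- (P5) distributivity
    ∀' ∀' ∀' (mulT &0 (addT &1 &2) =' addT (mulT &0 &1) (mulT &0 &2)),
    -- (P6) x + 0 = x
    ∀' (addT &0 zeroT =' &0),
    -- (P7) x × 0 = 0
    ∀' (mulT &0 zeroT =' zeroT),
    -- (P8) x × 1 = x
    ∀' (mulT &0 oneT =' &0),
    -- (P9) transitivity of <
    ∀' ∀' ∀' (ltBF &0 &1 ⊓ ltBF &1 &2 ⟹ ltBF &0 &2),
    -- (P10) irreflexivity of <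
    ∀' ∼(ltBF &0 &0),
    -- (P11) linearity of <
    ∀' ∀' (ltBF &0 &1 ⊔ &0 =' &1 ⊔ ltBF &1 &0),
    -- (P12) x < y → x + z < y + z
    ∀' ∀' ∀' (ltBF &0 &1 ⟹ ltBF (addT &0 &2) (addT &1 &2)),
    -- (P13) z ≠ 0 ∧ x < y → x × z < y × z
    ∀' ∀' ∀' (∼(&2 =' zeroT) ⊓ ltBF &0 &1 ⟹ ltBF (mulT &0 &2) (mulT &1 &2)),
    -- (P14) x < y ↔ ∃z ((x + z) + 1 = y)
    ∀' ∀' (ltBF &0 &1 ⇔ ∃' (addT (addT &0 &2) oneT =' &1)),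
    -- (P15) 0 < 1 ∧ (x > 0 → x ≥ 1)
    ltBF zeroT oneT ⊓ ∀' (ltBF zeroT &0 ⟹ ltBF oneT &0 ⊔ oneT =' &0),
    -- (P16) x ≥ 0
    ∀' (ltBF zeroT &0 ⊔ zeroT =' &0) }

/-! ### Formulas `θ(x, z̄)` with a distinguished variable `x` and parameters `z̄`

A formula `θ(x, z̄)` with `m` parameters `z̄` and a distinguished induction
variable `x` is represented as `θ : Lor.Formula (Fin m ⊕ Fin 1)`, where the
`Fin m` component gives the parameters and the `Fin 1` component gives `x`. -/

/-- The distinguished variable `x` as a term. -/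
def xT {m : ℕ} : Lor.Term (Fin m ⊕ Fin 1) := Term.var (Sum.inr 0)

/-- `θ(t, z̄)`, where `t` is a term possibly involving `x` and the parameters. -/
def substX {m : ℕ} (θ : Lor.Formula (Fin m ⊕ Fin 1)) (t : Lor.Term (Fin m ⊕ Fin 1)) :
    Lor.Formula (Fin m ⊕ Fin 1) :=
  θ.subst (Sum.elim (fun i => Term.var (Sum.inl i)) fun _ => t)

/-- `θ(t, z̄)` where `t` is a term in the parameters only. -/
def substP {m : ℕ} (θ : Lor.Formula (Fin m ⊕ Fin 1)) (t : Lor.Term (Fin m)) :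
    Lor.Formula (Fin m) :=
  θ.subst (Sum.elim (fun i => Term.var i) fun _ => t)

/-- `∀x θ(x, z̄)`. -/
noncomputable def allX {m : ℕ} (θ : Lor.Formula (Fin m ⊕ Fin 1)) : Lor.Formula (Fin m) :=
  Formula.iAlls (Fin 1) θ

/-- The universal closure of a formula, as a sentence. -/
noncomputable def closeAll {α : Type} [Finite α] (φ : Lor.Formula α) : Lor.Sentence :=
  Formula.iAlls α (φ.relabel (Sum.inr : α → Empty ⊕ α))

/-- `∀x' < x, θ(x', z̄)`, a formula with free variable `x` (and parameters). -/
noncomputable def allLtX {m : ℕ} (θ : Lor.Formula (Fin m ⊕ Fin 1)) :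
    Lor.Formula (Fin m ⊕ Fin 1) :=
  Formula.iAlls (Fin 1)
    (ltFml (Term.var (Sum.inr 0)) (Term.var (Sum.inl (Sum.inr 0))) ⟹
      θ.relabel (Sum.elim (fun i => Sum.inl (Sum.inl i)) fun _ => Sum.inr 0))

/-- `∀x' ≤ x, θ(x', z̄)`, a formula with free variable `x` (and parameters). -/
noncomputable def allLeX {m : ℕ} (θ : Lor.Formula (Fin m ⊕ Fin 1)) :
    Lor.Formula (Fin m ⊕ Fin 1) :=
  Formula.iAlls (Fin 1)
    (leFml (Term.var (Sum.inr 0)) (Term.var (Sum.inl (Sum.inr 0))) ⟹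
      θ.relabel (Sum.elim (fun i => Sum.inl (Sum.inl i)) fun _ => Sum.inr 0))

/-- The conjunction `⋀_{k<j} θ(k, z̄)`. -/
def conjNum {m : ℕ} (θ : Lor.Formula (Fin m ⊕ Fin 1)) : ℕ → Lor.Formula (Fin m)
  | 0 => ⊤
  | j + 1 => conjNum θ j ⊓ substP θ (numT j)

/-- The conjunction `⋀_{k<j} θ(x+k, z̄)`. -/
def conjShift {m : ℕ} (θ : Lor.Formula (Fin m ⊕ Fin 1)) : ℕ → Lor.Formula (Fin m ⊕ Fin 1)
  | 0 => ⊤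
  | j + 1 => conjShift θ j ⊓ substX θ (addT xT (numT j))

/-! ### Induction axioms -/

/-- The induction axiom `I_x θ`:
`∀z̄( θ(0,z̄) ∧ ∀x(θ(x,z̄) → θ(x+1,z̄)) → ∀x θ(x,z̄) )`. -/
noncomputable def indAx {m : ℕ} (θ : Lor.Formula (Fin m ⊕ Fin 1)) : Lor.Sentence :=
  closeAll ((substP θ zeroT ⊓ allX (θ ⟹ substX θ (addT xT oneT))) ⟹ allX θ)

/-- The `<`-induction axiom `I^<_x θ`:
`∀z̄( ∀y(∀x<y θ(x,z̄) → θ(y,z̄)) → ∀x θ(x,z̄) )`. -/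
noncomputable def indLtAx {m : ℕ} (θ : Lor.Formula (Fin m ⊕ Fin 1)) : Lor.Sentence :=
  closeAll (allX (allLtX θ ⟹ θ) ⟹ allX θ)

/-- The `(n+1)`-step induction axiom `I^{(n+1)-step}_x θ`:
`∀z̄( ⋀_{k<n+1} θ(k,z̄) ∧ ∀x(θ(x,z̄) → θ(x+n+1,z̄)) → ∀x θ(x,z̄) )`. -/
noncomputable def indStepAx {m : ℕ} (n : ℕ) (θ : Lor.Formula (Fin m ⊕ Fin 1)) : Lor.Sentence :=
  closeAll ((conjNum θ (n + 1) ⊓ allX (θ ⟹ substX θ (addT xT (numT (n + 1))))) ⟹ allX θ)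

/-- The `(n+1)`-induction axiom `I^{n+1}_x θ`:
`∀z̄( ⋀_{k<n+1} θ(k,z̄) ∧ ∀x(⋀_{k<n+1} θ(x+k,z̄) → θ(x+n+1,z̄)) → ∀x θ(x,z̄) )`. -/
noncomputable def indKAx {m : ℕ} (n : ℕ) (θ : Lor.Formula (Fin m ⊕ Fin 1)) : Lor.Sentence :=
  closeAll ((conjNum θ (n + 1) ⊓ allX (conjShift θ (n + 1) ⟹ substX θ (addT xT (numT (n + 1))))) ⟹
    allX θ)

/-- The polynomial induction axiom `I^p_x θ`:
`∀z̄( θ(0,z̄) ∧ ∀x(θ(x,z̄) → θ(2x,z̄) ∧ θ(2x+1,z̄)) → ∀x θ(x,z̄) )`, where `2x` is `(1+1)×x`. -/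
noncomputable def indPAx {m : ℕ} (θ : Lor.Formula (Fin m ⊕ Fin 1)) : Lor.Sentence :=
  closeAll ((substP θ zeroT ⊓
      allX (θ ⟹ substX θ (mulT twoT xT) ⊓ substX θ (addT (mulT twoT xT) oneT))) ⟹ allX θ)

/-! ### Theories -/

/-- Peano arithmetic: `PA⁻` plus induction for all `L_OR` formulas. -/
noncomputable def PA : Lor.Theory :=
  PAminus ∪ {σ | ∃ (m : ℕ) (θ : Lor.Formula (Fin m ⊕ Fin 1)), σ = indAx θ}

/-- `IOpen`: `PA⁻` plus induction for all quantifier-free `L_OR` formulas. -/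
noncomputable def IOpen : Lor.Theory :=
  PAminus ∪ {σ | ∃ (m : ℕ) (θ : Lor.Formula (Fin m ⊕ Fin 1)), θ.IsQF ∧ σ = indAx θ}

/-! ### Notions of inductiveness

A formula `φ(x)` with exactly one free variable `x` is represented as
`φ : Lor.Formula (Fin 0 ⊕ Fin 1)` (no parameters). -/

/-- Formulas `φ(x)` with exactly one free variable `x`. -/
abbrev OneVarFormula : Type := Lor.Formula (Fin 0 ⊕ Fin 1)

/-- The sentence `∀x φ(x)`. -/
noncomputable def allS (φ : OneVarFormula) : Lor.Sentence := closeAll (allX φ)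

/-- `φ(x)` is inductive: `PA⁻ ⊢ φ(0)` and `PA⁻ ⊢ ∀x(φ(x) → φ(x+1))`. -/
noncomputable def IsInductive (φ : OneVarFormula) : Prop :=
  PAminus ⊨ᵇ closeAll (substP φ zeroT) ∧
    PAminus ⊨ᵇ closeAll (allX (φ ⟹ substX φ (addT xT oneT)))

/-- `φ(x)` is `<`-inductive: `PA⁻ ⊢ ∀y(∀x<y φ(x) → φ(y))`. -/
noncomputable def IsLtInductive (φ : OneVarFormula) : Prop :=
  PAminus ⊨ᵇ closeAll (allX (allLtX φ ⟹ φ))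

/-- `φ(x)` is `(n+1)`-step inductive:
`PA⁻ ⊢ ⋀_{k<n+1} φ(k) ∧ ∀x(φ(x) → φ(x+n+1))`. -/
noncomputable def IsStepInductive (n : ℕ) (φ : OneVarFormula) : Prop :=
  PAminus ⊨ᵇ closeAll (conjNum φ (n + 1) ⊓ allX (φ ⟹ substX φ (addT xT (numT (n + 1)))))

/-- `φ(x)` is `(n+1)`-inductive:
`PA⁻ ⊢ ⋀_{k<n+1} φ(k) ∧ ∀x(⋀_{k<n+1} φ(x+k) → φ(x+n+1))`. -/
noncomputable def IsKInductive (n : ℕ) (φ : OneVarFormula) : Prop :=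
  PAminus ⊨ᵇ
    closeAll (conjNum φ (n + 1) ⊓ allX (conjShift φ (n + 1) ⟹ substX φ (addT xT (numT (n + 1)))))

/-- `φ(x)` is p-inductive (polynomially inductive):
`PA⁻ ⊢ φ(0) ∧ ∀x(φ(x) → φ(2x) ∧ φ(2x+1))`. -/
noncomputable def IsPInductive (φ : OneVarFormula) : Prop :=
  PAminus ⊨ᵇ closeAll (substP φ zeroT ⊓
    allX (φ ⟹ substX φ (mulT twoT xT) ⊓ substX φ (addT (mulT twoT xT) oneT)))

/-! ### Cuts -/

/-- `φ(x)` is a cut: an inductive formula with `PA⁻ ⊢ ∀x∀y(x<y ∧ φ(y) → φ(x))`. -/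
noncomputable def IsCut (φ : OneVarFormula) : Prop :=
  IsInductive φ ∧
    PAminus ⊨ᵇ closeAll
      (ltFml (Term.var (Sum.inr 0) : Lor.Term (Fin 0 ⊕ Fin 2)) (Term.var (Sum.inr 1)) ⊓
          φ.relabel (Sum.elim (fun i => Sum.inl i) fun _ => Sum.inr 1) ⟹
        φ.relabel (Sum.elim (fun i => Sum.inl i) fun _ => Sum.inr 0))

/-- `φ(x)` is an a-cut: a cut with `PA⁻ ⊢ ∀x(φ(x) → φ(x+x))`. -/
noncomputable def IsACut (φ : OneVarFormula) : Prop :=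
  IsCut φ ∧ PAminus ⊨ᵇ closeAll (allX (φ ⟹ substX φ (addT xT xT)))

/-- `φ(x)` is an am-cut: an a-cut with `PA⁻ ⊢ ∀x(φ(x) → φ(x×x))`. -/
noncomputable def IsAMCut (φ : OneVarFormula) : Prop :=
  IsACut φ ∧ PAminus ⊨ᵇ closeAll (allX (φ ⟹ substX φ (mulT xT xT)))

/-- The formula `∃y( x = 2y ∨ x = 2y+1 )` in the single free variable `x`,
where `2y` abbreviates `(1+1)×y`. -/
noncomputable def evenOrOddFml : Lor.Formula (Fin 1) :=
  Formula.iExs (Fin 1)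
    (Term.equal (Term.var (Sum.inl 0)) (mulT twoT (Term.var (Sum.inr 0))) ⊔
      Term.equal (Term.var (Sum.inl 0)) (addT (mulT twoT (Term.var (Sum.inr 0))) oneT))


namespace Stmt18
open Structure

variable {M : Type*} [Lor.Structure M]

def Aop (a b : M) : M := funMap (L := Lor) (LorFunc.add : Lor.Functions 2) ![a, b]
def Mop (a b : M) : M := funMap (L := Lor) (LorFunc.mul : Lor.Functions 2) ![a, b]
def Zc : M := funMap (L := Lor) (LorFunc.zero : Lor.Functions 0) ![]
def Oc : M := funMap (L := Lor) (LorFunc.one : Lor.Functions 0) ![]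
def Lt (a b : M) : Prop := RelMap (L := Lor) (LorRel.lt : Lor.Relations 2) ![a, b]

@[simp] lemma realize_zeroT {α : Type} (v : α → M) : (zeroT).realize v = Zc := by
  simp only [zeroT, Constants.term, Term.realize, Zc]
  congr; exact Subsingleton.elim _ _

@[simp] lemma realize_oneT {α : Type} (v : α → M) : (oneT).realize v = Oc := by
  simp only [oneT, Constants.term, Term.realize, Oc]
  congr; exact Subsingleton.elim _ _

@[simp] lemma realize_addT {α : Type} (t u : Lor.Term α) (v : α → M) :
    (addT t u).realize v = Aop (t.realize v) (u.realize v) := by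
  simp only [addT, Term.realize_functions_apply₂, Aop]
  exact Term.realize_functions_apply₂

@[simp] lemma realize_mulT {α : Type} (t u : Lor.Term α) (v : α → M) :
    (mulT t u).realize v = Mop (t.realize v) (u.realize v) := by
  simp only [mulT, Term.realize_functions_apply₂, Mop]
  exact Term.realize_functions_apply₂

@[simp] lemma realize_ltFml {α : Type} (t u : Lor.Term α) (v : α → M) :
    (ltFml t u).Realize v ↔ Lt (t.realize v) (u.realize v) := by
  simp only [ltFml, Formula.realize_rel₂, Lt]
  exact Formula.realize_rel₂

@[simp] lemma realize_ltBF {α : Type} {n : ℕ} (t u : Lor.Term (α ⊕ Fin n))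
    (v : α → M) (xs : Fin n → M) :
    (ltBF t u).Realize v xs ↔
      Lt (t.realize (Sum.elim v xs)) (u.realize (Sum.elim v xs)) := by
  simp only [ltBF, BoundedFormula.realize_rel₂, Lt]
  exact BoundedFormula.realize_rel₂

section Facts
variable [M ⊨ PAminus]

lemma add_comm' (a b : M) : Aop a b = Aop b a := by
  have h := Theory.realize_sentence_of_mem (M := M) PAminus
    (show (∀' ∀' (addT &0 &1 =' addT &1 &0) : Lor.Sentence) ∈ PAminus by simp [PAminus])
  simp only [Sentence.Realize, Formula.Realize, BoundedFormula.realize_all,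
    BoundedFormula.realize_bdEqual, addT, Term.realize_functions_apply₂, Term.realize_var] at h
  simpa [Aop, Fin.snoc, Term.realize_functions_apply₂ (L := Lor) (f := LorFunc.add)] using h a b

lemma mul_comm' (a b : M) : Mop a b = Mop b a := by
  have h := Theory.realize_sentence_of_mem (M := M) PAminus
    (show (∀' ∀' (mulT &0 &1 =' mulT &1 &0) : Lor.Sentence) ∈ PAminus by simp [PAminus])
  simp only [Sentence.Realize, Formula.Realize, BoundedFormula.realize_all,
    BoundedFormula.realize_bdEqual, mulT, Term.realize_functions_apply₂, Term.realize_var] at h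
  simpa [Mop, Fin.snoc, Term.realize_functions_apply₂ (L := Lor) (f := LorFunc.mul)] using h a b

lemma distrib' (a b c : M) : Mop a (Aop b c) = Aop (Mop a b) (Mop a c) := by
  have h := Theory.realize_sentence_of_mem (M := M) PAminus
    (show (∀' ∀' ∀' (mulT &0 (addT &1 &2) =' addT (mulT &0 &1) (mulT &0 &2)) : Lor.Sentence)
      ∈ PAminus by simp [PAminus])
  simp only [Sentence.Realize, Formula.Realize, BoundedFormula.realize_all,
    BoundedFormula.realize_bdEqual, mulT, addT, Term.realize_functions_apply₂,
    Term.realize_var] at h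
  simpa [Aop, Mop, Fin.snoc, Term.realize_functions_apply₂ (L := Lor) (f := LorFunc.add),
    Term.realize_functions_apply₂ (L := Lor) (f := LorFunc.mul)] using h a b c

lemma add_zero' (a : M) : Aop a Zc = a := by
  have h := Theory.realize_sentence_of_mem (M := M) PAminus
    (show (∀' (addT &0 zeroT =' &0) : Lor.Sentence) ∈ PAminus by simp [PAminus])
  simp only [Sentence.Realize, Formula.Realize, BoundedFormula.realize_all,
    BoundedFormula.realize_bdEqual, Term.realize_var] at h
  have := h a
  rw [realize_addT, realize_zeroT] at this
  simpa [Fin.snoc] using this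

lemma mul_zero' (a : M) : Mop a Zc = Zc := by
  have h := Theory.realize_sentence_of_mem (M := M) PAminus
    (show (∀' (mulT &0 zeroT =' zeroT) : Lor.Sentence) ∈ PAminus by simp [PAminus])
  simp only [Sentence.Realize, Formula.Realize, BoundedFormula.realize_all,
    BoundedFormula.realize_bdEqual, Term.realize_var] at h
  have := h a
  rw [realize_mulT, realize_zeroT] at this
  simpa [Fin.snoc] using this

lemma mul_one' (a : M) : Mop a Oc = a := by
  have h := Theory.realize_sentence_of_mem (M := M) PAminus
    (show (∀' (mulT &0 oneT =' &0) : Lor.Sentence) ∈ PAminus by simp [PAminus])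
  simp only [Sentence.Realize, Formula.Realize, BoundedFormula.realize_all,
    BoundedFormula.realize_bdEqual, Term.realize_var] at h
  have := h a
  rw [realize_mulT, realize_oneT] at this
  simpa [Fin.snoc] using this

lemma irrefl' (a : M) : ¬ Lt a a := by
  have h := Theory.realize_sentence_of_mem (M := M) PAminus
    (show (∀' ∼(ltBF &0 &0) : Lor.Sentence) ∈ PAminus by simp [PAminus])
  simp only [Sentence.Realize, Formula.Realize, BoundedFormula.realize_all,
    BoundedFormula.realize_not, realize_ltBF, Term.realize_var] at h
  simpa [Fin.snoc] using h a

lemma linear' (a b : M) : Lt a b ∨ a = b ∨ Lt b a := by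
  have h := Theory.realize_sentence_of_mem (M := M) PAminus
    (show (∀' ∀' (ltBF &0 &1 ⊔ &0 =' &1 ⊔ ltBF &1 &0) : Lor.Sentence) ∈ PAminus by
      simp [PAminus])
  simp only [Sentence.Realize, Formula.Realize, BoundedFormula.realize_all,
    BoundedFormula.realize_sup, BoundedFormula.realize_bdEqual, realize_ltBF,
    Term.realize_var] at h
  have := h a b
  simpa [Fin.snoc, or_assoc] using this

lemma add_lt' (a b c : M) (hab : Lt a b) : Lt (Aop a c) (Aop b c) := by
  have h := Theory.realize_sentence_of_mem (M := M) PAminus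
    (show (∀' ∀' ∀' (ltBF &0 &1 ⟹ ltBF (addT &0 &2) (addT &1 &2)) : Lor.Sentence) ∈ PAminus by
      simp [PAminus])
  simp only [Sentence.Realize, Formula.Realize, BoundedFormula.realize_all,
    BoundedFormula.realize_imp, realize_ltBF, Term.realize_var, realize_addT] at h
  have := h a b c
  simpa [Fin.snoc] using this (by simpa [Fin.snoc] using hab)

lemma lt_iff' (a b : M) : Lt a b ↔ ∃ z, Aop (Aop a z) Oc = b := by
  have h := Theory.realize_sentence_of_mem (M := M) PAminus
    (show (∀' ∀' (ltBF &0 &1 ⇔ ∃' (addT (addT &0 &2) oneT =' &1)) : Lor.Sentence) ∈ PAminus by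
      simp [PAminus])
  simp only [Sentence.Realize, Formula.Realize, BoundedFormula.realize_all,
    BoundedFormula.realize_iff, BoundedFormula.realize_ex, BoundedFormula.realize_bdEqual,
    realize_ltBF, Term.realize_var, realize_addT, realize_oneT] at h
  have := h a b
  simpa [Fin.snoc] using this

lemma zero_lt_one' : Lt (Zc : M) Oc := by
  have h := Theory.realize_sentence_of_mem (M := M) PAminus
    (show (ltBF zeroT oneT ⊓ ∀' (ltBF zeroT &0 ⟹ ltBF oneT &0 ⊔ oneT =' &0) : Lor.Sentence)
      ∈ PAminus by simp [PAminus])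
  simp only [Sentence.Realize, Formula.Realize, BoundedFormula.realize_inf, realize_ltBF,
    realize_zeroT, realize_oneT] at h
  exact h.1

lemma zero_le' (a : M) : Lt Zc a ∨ Zc = a := by
  have h := Theory.realize_sentence_of_mem (M := M) PAminus
    (show (∀' (ltBF zeroT &0 ⊔ zeroT =' &0) : Lor.Sentence) ∈ PAminus by simp [PAminus])
  simp only [Sentence.Realize, Formula.Realize, BoundedFormula.realize_all,
    BoundedFormula.realize_sup, BoundedFormula.realize_bdEqual, realize_ltBF,
    Term.realize_var, realize_zeroT] at h
  simpa [Fin.snoc] using h a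

lemma zero_add' (a : M) : Aop Zc a = a := by rw [add_comm', add_zero']

lemma two_mul' (d : M) : Mop (Aop Oc Oc) d = Aop d d := by
  rw [mul_comm', distrib', mul_one']

lemma lt_add_self' (d : M) (h : Lt Zc d) : Lt d (Aop d d) := by
  have := add_lt' Zc d d h
  rwa [zero_add'] at this

lemma lt_succ_double' (d : M) : Lt d (Aop (Aop d d) Oc) :=
  (lt_iff' d _).2 ⟨d, rfl⟩

end Facts


/- realize lemmas for the formula constructors, specialized to m = 0 -/
section RealizeLemmas
variable {M : Type*} [Lor.Structure M]

@[simp] lemma realize_twoT {α : Type} (v : α → M) : (twoT).realize v = Aop Oc Oc := by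
  simp [twoT]

omit [Lor.Structure M] in
lemma funext01 (v w : Fin 0 ⊕ Fin 1 → M) (h : v (Sum.inr 0) = w (Sum.inr 0)) : v = w := by
  funext p
  rcases p with i | j
  · exact i.elim0
  · have : j = 0 := Subsingleton.elim _ _
    rw [this]; exact h

lemma realize_ext (θ : Lor.Formula (Fin 0 ⊕ Fin 1)) {v w : Fin 0 ⊕ Fin 1 → M}
    (h : v (Sum.inr 0) = w (Sum.inr 0)) : θ.Realize v ↔ θ.Realize w := by
  rw [funext01 v w h]

lemma realize_closeAll {α : Type} [Finite α] (φ : Lor.Formula α)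
    (v : Empty → M) (xs : Fin 0 → M) :
    BoundedFormula.Realize (closeAll φ) v xs ↔ ∀ w : α → M, φ.Realize w := by
  have hxs : xs = default := Subsingleton.elim _ _
  subst hxs
  have h0 : BoundedFormula.Realize (closeAll φ) v default ↔ Formula.Realize (closeAll φ) v :=
    Iff.rfl
  rw [h0, closeAll, Formula.realize_iAlls]
  simp

lemma realize_substX (θ : Lor.Formula (Fin 0 ⊕ Fin 1)) (t : Lor.Term (Fin 0 ⊕ Fin 1))
    (v : Fin 0 ⊕ Fin 1 → M) :
    (substX θ t).Realize v ↔ θ.Realize (fun _ => t.realize v) := by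
  rw [substX]
  show BoundedFormula.Realize _ v default ↔ _
  rw [BoundedFormula.realize_subst]
  exact realize_ext θ (by simp)

lemma realize_substP (θ : Lor.Formula (Fin 0 ⊕ Fin 1)) (t : Lor.Term (Fin 0))
    (v : Fin 0 → M) :
    (substP θ t).Realize v ↔ θ.Realize (fun _ => t.realize v) := by
  rw [substP]
  show BoundedFormula.Realize _ v default ↔ _
  rw [BoundedFormula.realize_subst]
  exact realize_ext θ (by simp)

lemma realize_allX (θ : Lor.Formula (Fin 0 ⊕ Fin 1)) (v : Fin 0 → M) :
    (allX θ).Realize v ↔ ∀ a : M, θ.Realize (fun _ => a) := by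
  rw [allX, Formula.realize_iAlls]
  constructor
  · intro h a
    exact (realize_ext θ (by simp)).1 (h (fun _ => a))
  · intro h i
    exact (realize_ext θ (by simp)).2 (h (i 0))

lemma realize_allLtX (θ : Lor.Formula (Fin 0 ⊕ Fin 1)) (v : Fin 0 ⊕ Fin 1 → M) :
    (allLtX θ).Realize v ↔ ∀ b : M, Lt b (v (Sum.inr 0)) → θ.Realize (fun _ => b) := by
  rw [allLtX, Formula.realize_iAlls]
  simp only [Formula.realize_imp, realize_ltFml, Term.realize_var, Sum.elim_inr, Sum.elim_inl,
    Formula.realize_relabel]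
  constructor
  · intro h b hb
    have := h (fun _ => b) (by simpa using hb)
    exact (realize_ext θ (by simp [Function.comp])).1 this
  · intro h i hi
    have := h (i 0) (by simpa using hi)
    exact (realize_ext θ (by simp [Function.comp])).2 this

lemma realize_evenOrOdd (c : M) :
    evenOrOddFml.Realize (fun _ => c) ↔
      ∃ d : M, c = Mop (Aop Oc Oc) d ∨ c = Aop (Mop (Aop Oc Oc) d) Oc := by
  rw [evenOrOddFml, Formula.realize_iExs]
  simp only [Formula.realize_sup, Formula.realize_equal, Term.realize_var, Sum.elim_inl,
    Sum.elim_inr, realize_mulT, realize_addT, realize_oneT, realize_twoT]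
  constructor
  · rintro ⟨i, h⟩
    exact ⟨i 0, h⟩
  · rintro ⟨d, h⟩
    exact ⟨fun _ => d, h⟩

end RealizeLemmas
end Stmt18

open Stmt18

/-- The following are equivalent: (1) there is a p-inductive formula that is not
`<`-inductive; (2) in some model `M` of `PA⁻`, there is an element `c`, definable in `M`
by a parameter-free `L_OR` formula, that is neither even nor odd. -/
theorem stmt18 :
    (∃ φ : OneVarFormula, IsPInductive φ ∧ ¬IsLtInductive φ) ↔
      ∃ (M : Theory.ModelType.{0, 0, 0} PAminus) (c : M),
        (∃ δ : Lor.Formula (Fin 1), ∀ a : M, δ.Realize (fun _ => a) ↔ a = c) ∧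
          ¬ evenOrOddFml.Realize fun _ => c := by
  constructor
  · rintro ⟨φ, hP, hL⟩
    unfold IsLtInductive at hL
    rw [Theory.models_iff_not_satisfiable, not_not] at hL
    obtain ⟨N⟩ := hL
    haveI hNpa : N ⊨ PAminus := N.is_model.mono Set.subset_union_left
    have hσ : N ⊨ (closeAll (allX (allLtX φ ⟹ φ))).not :=
      Theory.realize_sentence_of_mem
        (PAminus ∪ {(closeAll (allX (allLtX φ ⟹ φ))).not})
        (Set.mem_union_right _ (Set.mem_singleton _))
    rw [Sentence.realize_not] at hσ
    have hσ' : ¬ BoundedFormula.Realize (closeAll (allX (allLtX φ ⟹ φ)))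
        (default : Empty → N) (default : Fin 0 → N) := hσ
    rw [realize_closeAll] at hσ'
    push_neg at hσ'
    obtain ⟨w, hw⟩ := hσ'
    rw [realize_allX] at hw
    push_neg at hw
    obtain ⟨c, hc⟩ := hw
    rw [Formula.realize_imp] at hc
    push_neg at hc
    obtain ⟨hminc, hnc⟩ := hc
    rw [realize_allLtX] at hminc
    have hmin : ∀ b : N, Lt b c → φ.Realize (fun _ => b) := fun b hb => hminc b hb
    -- the defining formula
    set g : Fin 0 ⊕ Fin 1 → Fin 1 := Sum.elim (fun i => i.elim0) (fun _ => 0) with hg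
    refine ⟨⟨N⟩, c, ⟨(allLtX φ ⊓ ∼φ).relabel g, ?_⟩, ?_⟩
    · intro a
      rw [Formula.realize_relabel]
      have hcomp : (fun _ => a) ∘ g = (fun _ => a : Fin 0 ⊕ Fin 1 → N) := rfl
      rw [hcomp, Formula.realize_inf, Formula.realize_not, realize_allLtX]
      constructor
      · rintro ⟨hmina, hna⟩
        rcases linear' a c with h | h | h
        · exact absurd (hmin a h) hna
        · exact h
        · exact absurd (hmina c h) hnc
      · rintro rfl
        exact ⟨fun b hb => hmin b hb, hnc⟩
    · -- c is neither even nor odd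
      rw [realize_evenOrOdd]
      rintro ⟨d, hd | hd⟩
      · -- c = 2d
        -- instantiate p-inductivity in N
        have hP' : PAminus ⊨ᵇ closeAll (substP φ zeroT ⊓
            allX (φ ⟹ substX φ (mulT twoT xT) ⊓ substX φ (addT (mulT twoT xT) oneT))) := hP
        have hPN : ∀ w' : Fin 0 → N, _ := (realize_closeAll _ (default : Empty → N)
            (default : Fin 0 → N)).1 (hP'.realize_sentence N)
        have hPs := hPN default
        rw [Formula.realize_inf, realize_substP, realize_allX] at hPs
        obtain ⟨hbase, hstep⟩ := hPs
        rcases zero_le' d with h0 | h0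
        · -- 0 < d
          have hdc : Lt d c := by rw [hd, two_mul']; exact lt_add_self' d h0
          have hφd := hmin d hdc
          have := hstep d
          rw [Formula.realize_imp, Formula.realize_inf, realize_substX, realize_substX] at this
          have h2d := (this hφd).1
          simp only [realize_mulT, realize_twoT, xT, Term.realize_var] at h2d
          rw [← hd] at h2d
          exact hnc h2d
        · -- d = 0, so c = 0
          rw [← h0, mul_zero'] at hd
          subst hd
          apply hnc
          simp only [realize_zeroT] at hbase
          exact hbase
      · -- c = 2d + 1
        have hP' : PAminus ⊨ᵇ closeAll (substP φ zeroT ⊓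
            allX (φ ⟹ substX φ (mulT twoT xT) ⊓ substX φ (addT (mulT twoT xT) oneT))) := hP
        have hPN : ∀ w' : Fin 0 → N, _ := (realize_closeAll _ (default : Empty → N)
            (default : Fin 0 → N)).1 (hP'.realize_sentence N)
        have hPs := hPN default
        rw [Formula.realize_inf, realize_substP, realize_allX] at hPs
        obtain ⟨hbase, hstep⟩ := hPs
        have hdc : Lt d c := by rw [hd, two_mul']; exact lt_succ_double' d
        have hφd := hmin d hdc
        have := hstep d
        rw [Formula.realize_imp, Formula.realize_inf, realize_substX, realize_substX] at this
        have h2d1 := (this hφd).2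
        simp only [realize_addT, realize_mulT, realize_twoT, realize_oneT, xT,
          Term.realize_var] at h2d1
        rw [← hd] at h2d1
        exact hnc h2d1
  · rintro ⟨M, c, ⟨δ, hδ⟩, hne⟩
    set g' : Fin 1 → Fin 0 ⊕ Fin 1 := fun _ => Sum.inr 0 with hg'
    set φ : OneVarFormula := (δ.relabel g') ⟹ (evenOrOddFml.relabel g') with hφ
    have hφreal : ∀ (N : Type) [Lor.Structure N] (b : N),
        φ.Realize (fun _ => b) ↔
          (δ.Realize (fun _ => b) → evenOrOddFml.Realize (fun _ => b)) := by
      intro N _ b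
      rw [hφ]
      rw [show (Formula.Realize ((δ.relabel g') ⟹ (evenOrOddFml.relabel g'))
          (fun _ => b) : Prop) = BoundedFormula.Realize
          ((δ.relabel g') ⟹ (evenOrOddFml.relabel g')) (fun _ => b) default from rfl]
      rw [BoundedFormula.realize_imp]
      rw [show (BoundedFormula.Realize (δ.relabel g') (fun _ => b) default : Prop)
          = Formula.Realize (δ.relabel g') (fun _ => b) from rfl]
      rw [show (BoundedFormula.Realize (evenOrOddFml.relabel g') (fun _ => b) default : Prop)
          = Formula.Realize (evenOrOddFml.relabel g') (fun _ => b) from rfl]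
      rw [Formula.realize_relabel, Formula.realize_relabel]
      exact Iff.rfl
    refine ⟨φ, ?_, ?_⟩
    · -- p-inductive
      intro N v xs
      rw [realize_closeAll]
      intro w
      rw [Formula.realize_inf]
      constructor
      · rw [realize_substP]
        simp only [realize_zeroT]
        rw [hφreal]
        intro _
        rw [realize_evenOrOdd]
        exact ⟨Zc, Or.inl (mul_zero' _).symm⟩
      · rw [realize_allX]
        intro a
        rw [Formula.realize_imp, Formula.realize_inf, realize_substX, realize_substX]
        intro _
        simp only [realize_addT, realize_mulT, realize_twoT, realize_oneT, xT, Term.realize_var]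
        constructor
        · rw [hφreal]
          intro _
          rw [realize_evenOrOdd]
          exact ⟨a, Or.inl rfl⟩
        · rw [hφreal]
          intro _
          rw [realize_evenOrOdd]
          exact ⟨a, Or.inr rfl⟩
    · -- not <-inductive
      intro h
      have h' : PAminus ⊨ᵇ closeAll (allX (allLtX φ ⟹ φ)) := h
      have hs : BoundedFormula.Realize (closeAll (allX (allLtX φ ⟹ φ)))
          (default : Empty → M) (default : Fin 0 → M) := h'.realize_sentence M
      rw [realize_closeAll] at hs
      have hs' := hs default
      rw [realize_allX] at hs'
      have hc := hs' c
      rw [Formula.realize_imp] at hc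
      have hltc : (allLtX φ).Realize (fun _ => (c : M)) := by
        rw [realize_allLtX]
        intro b hb
        rw [hφreal]
        intro hδb
        exact absurd hb (by rw [(hδ b).1 hδb]; exact irrefl' c)
      have hφc := hc hltc
      rw [hφreal] at hφc
      exact hne (hφc ((hδ c).2 rfl))
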